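/- For correlated Erdős–Rényi random graphs with structures S_a, S_b, both (1/C(n,2)) log(1/P_{S_a|G_b}(S_a|G_b)) and (1/C(n,2)) log(1/P_{S_a|S_b}(S_a|S_b)) converge in probability to H(A|B) as n → ∞. -/

import Mathlib

open Finset Filter

namespace GraphSI

/-- A (weighted) graph on vertex set `Fin n` with marks in `α`, identified with the
function assigning a mark to each unordered pair of vertices. -/
abbrev Graph (n : ℕ) (α : Type*) := Sym2 (Fin n) → α

/-- Relabeling of the vertices of a graph by a permutation `π`:
the `(i,j)` entry of `π(g)` is the `(π⁻¹ i, π⁻¹ j)` entry of `g`. -/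
def relabel {n : ℕ} {α : Type*} (π : Equiv.Perm (Fin n)) (g : Graph n α) : Graph n α :=
  fun e => g (e.map π.symm)

/-- The unordered pairs `{i,j}` with `i ≠ j` (i.e. the pairs `i < j`). -/
def edgePairs (n : ℕ) : Finset (Sym2 (Fin n)) :=
  Finset.univ.filter (fun e => ¬ e.IsDiag)

/-- Joint probability of a pair of graphs under the correlated Erdős–Rényi model with
per-edge joint mark distribution `P`. -/
def cer {n : ℕ} {α β : Type*} (P : α × β → ℝ) (ga : Graph n α) (gb : Graph n β) : ℝ :=
  ∏ e ∈ edgePairs n, P (ga e, gb e)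

/-- Probability of a graph under the Erdős–Rényi model with i.i.d. edge marks `P`. -/
def erP {n : ℕ} {β : Type*} (P : β → ℝ) (g : Graph n β) : ℝ :=
  ∏ e ∈ edgePairs n, P (g e)

/-- Base-2 Shannon entropy of a pmf on a finite type (with the convention 0 log 0 = 0). -/
noncomputable def H2 {γ : Type*} [Fintype γ] (P : γ → ℝ) : ℝ :=
  ∑ x, P x * Real.logb 2 (P x)⁻¹

/-- Conditional entropy `H(A|B) = H(A,B) - H(B)` for a joint pmf on `α × β`. -/
noncomputable def condH {α β : Type*} [Fintype α] [Fintype β] (P : α × β → ℝ) : ℝ :=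
  H2 P - H2 (fun b => ∑ a, P (a, b))

/-- `C(n,2) = n(n-1)/2` as a real number. -/
def Cn2 (n : ℕ) : ℝ := n.choose 2

/-- Probability of an event under a pmf on a finite sample space. -/
noncomputable def prob {Ω : Type*} [Fintype Ω] (P : Ω → ℝ) (E : Set Ω) : ℝ :=
  ∑ ω, E.indicator P ω

/-- Maximum of a real-valued function over all permutations of `[n]`. -/
def maxPerm {n : ℕ} (f : Equiv.Perm (Fin n) → ℝ) : ℝ :=
  Finset.univ.sup' ⟨1, Finset.mem_univ 1⟩ f

instance {n : ℕ} {γ : Type*} [DecidableEq γ] (g : Graph n γ) :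
    DecidablePred (fun g' : Graph n γ => ∃ π : Equiv.Perm (Fin n), relabel π g = g') :=
  fun _ => Fintype.decidableExistsFintype

/-- Sum of `f` over the isomorphism class (the structure) of `g`. -/
def isoSum {n : ℕ} {γ : Type*} [Fintype γ] [DecidableEq γ]
    (f : Graph n γ → ℝ) (g : Graph n γ) : ℝ :=
  ∑ g' ∈ Finset.univ.filter
      (fun g' => ∃ π : Equiv.Perm (Fin n), relabel π g = g'), f g'

/-- Order of the automorphism group of `g`. -/
def autCard {n : ℕ} {γ : Type*} [DecidableEq γ] (g : Graph n γ) : ℕ :=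
  (Finset.univ.filter (fun π : Equiv.Perm (Fin n) => relabel π g = g)).card

section aux
variable {n : ℕ} {α β γ : Type*}

lemma relabel_one (g : Graph n γ) : relabel 1 g = g := by
  funext e; simp [relabel, Equiv.Perm.one_symm]

lemma relabel_relabel (σ π : Equiv.Perm (Fin n)) (g : Graph n γ) :
    relabel σ (relabel π g) = relabel (σ * π) g := by
  funext e
  simp only [relabel, Sym2.map_map]
  congr 1

lemma relabel_bijective (σ : Equiv.Perm (Fin n)) :
    Function.Bijective (relabel (α := γ) σ) := by
  apply Function.bijective_iff_has_inverse.2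
  exact ⟨relabel σ⁻¹, fun g => by rw [relabel_relabel]; simp [relabel_one],
    fun g => by rw [relabel_relabel]; simp [relabel_one]⟩

lemma map_symm_mem_edgePairs (σ : Equiv.Perm (Fin n)) {e : Sym2 (Fin n)}
    (he : e ∈ edgePairs n) : e.map σ ∈ edgePairs n := by
  simp only [edgePairs, mem_filter, mem_univ, true_and] at he ⊢
  rwa [Sym2.isDiag_map σ.injective]

lemma cer_relabel (P : α × β → ℝ) (σ : Equiv.Perm (Fin n))
    (ga : Graph n α) (gb : Graph n β) :
    cer P (relabel σ ga) (relabel σ gb) = cer P ga gb := by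
  unfold cer relabel
  apply Finset.prod_nbij' (fun e => e.map σ.symm) (fun e => e.map σ)
  · exact fun e he => map_symm_mem_edgePairs _ he
  · exact fun e he => map_symm_mem_edgePairs _ he
  · intro e _; simp [Sym2.map_map]
  · intro e _; simp [Sym2.map_map]
  · intro e _; rfl

/-- membership of `g` in its own class -/
lemma mem_class_self [Fintype γ] [DecidableEq γ] (g : Graph n γ) :
    g ∈ Finset.univ.filter (fun g' => ∃ π : Equiv.Perm (Fin n), relabel π g = g') :=
  Finset.mem_filter.2 ⟨Finset.mem_univ _, ⟨1, relabel_one g⟩⟩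

lemma le_isoSum [Fintype γ] [DecidableEq γ] (f : Graph n γ → ℝ) (hf : ∀ g, 0 ≤ f g)
    (g : Graph n γ) : f g ≤ isoSum f g :=
  Finset.single_le_sum (fun g' _ => hf g') (mem_class_self g)

lemma isoSum_nonneg [Fintype γ] [DecidableEq γ] (f : Graph n γ → ℝ) (hf : ∀ g, 0 ≤ f g)
    (g : Graph n γ) : 0 ≤ isoSum f g :=
  Finset.sum_nonneg (fun g' _ => hf g')

lemma cer_nonneg (P : α × β → ℝ) (hP0 : ∀ x, 0 ≤ P x) (ga : Graph n α) (gb : Graph n β) :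
    0 ≤ cer P ga gb :=
  Finset.prod_nonneg (fun e _ => hP0 _)

lemma card_edgePairs : (edgePairs n).card = n.choose 2 := by
  have h := Sym2.card_subtype_not_diag (α := Fin n)
  rw [Fintype.card_subtype] at h
  simpa [edgePairs, Fintype.card_fin] using h

lemma card_diagPairs : (Finset.univ \ edgePairs n).card = n := by
  have h1 : Finset.univ \ edgePairs n
      = Finset.univ.filter (fun e : Sym2 (Fin n) => e.IsDiag) := by
    ext e; simp [edgePairs]
  have h := Sym2.card_subtype_diag (α := Fin n)
  rw [Fintype.card_subtype] at h
  rw [h1, h, Fintype.card_fin]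

/-- product-sum interchange over all functions -/
lemma sum_fun_prod {ι κ : Type*} [Fintype ι] [DecidableEq ι] [Fintype κ] [DecidableEq κ]
    (E : Finset ι) (F : ι → κ → ℝ) :
    ∑ g : ι → κ, ∏ e ∈ E, F e (g e)
      = (Fintype.card κ : ℝ) ^ ((Finset.univ \ E).card) * ∏ e ∈ E, (∑ x, F e x) := by
  have h1 : ∀ g : ι → κ, ∏ e ∈ E, F e (g e)
      = ∏ e : ι, (if e ∈ E then F e (g e) else 1) := by
    intro g
    calc ∏ e ∈ E, F e (g e)
        = ∏ e ∈ E, (if e ∈ E then F e (g e) else 1) :=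
          Finset.prod_congr rfl (fun e he => (if_pos he).symm)
      _ = ∏ e : ι, (if e ∈ E then F e (g e) else 1) :=
          Finset.prod_subset (Finset.subset_univ E) (fun e _ he => if_neg he)
  simp only [h1]
  have h2 : ∀ e : ι, (∑ x : κ, (if e ∈ E then F e x else 1))
      = (if e ∈ E then (∑ x, F e x) else (Fintype.card κ : ℝ)) := by
    intro e; split_ifs <;> simp
  calc ∑ g : ι → κ, ∏ e : ι, (if e ∈ E then F e (g e) else 1)
      = ∏ e : ι, ∑ x : κ, (if e ∈ E then F e x else 1) := by
        rw [Finset.prod_univ_sum]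
        rw [Fintype.piFinset_univ]
    _ = ∏ e : ι, (if e ∈ E then (∑ x, F e x) else (Fintype.card κ : ℝ)) :=
        Finset.prod_congr rfl (fun e _ => h2 e)
    _ = (Fintype.card κ : ℝ) ^ ((Finset.univ \ E).card) * ∏ e ∈ E, (∑ x, F e x) := by
        rw [← Finset.prod_sdiff (Finset.subset_univ E)]
        congr 1
        · rw [Finset.prod_congr rfl (fun e he => if_neg (Finset.mem_sdiff.1 he).2),
            Finset.prod_const]
        · exact Finset.prod_congr rfl (fun e he => if_pos he)

variable [Fintype α] [Fintype β] [DecidableEq α] [DecidableEq β]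

lemma sum_cer_pair (F : α × β → ℝ) :
    ∑ p : Graph n α × Graph n β, cer F p.1 p.2
      = ((Fintype.card α * Fintype.card β : ℕ) : ℝ) ^ n * (∑ x, F x) ^ (n.choose 2) := by
  have key : ∑ p : Graph n α × Graph n β, cer F p.1 p.2
      = ∑ g : Sym2 (Fin n) → α × β, ∏ e ∈ edgePairs n, F (g e) := by
    apply Fintype.sum_equiv (Equiv.arrowProdEquivProdArrow (Sym2 (Fin n)) (fun _ => α) (fun _ => β)).symm
    intro g
    unfold cer
    apply Finset.prod_congr rfl
    intro e _
    simp [Equiv.arrowProdEquivProdArrow]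
  rw [key, sum_fun_prod (edgePairs n) (fun _ x => F x), card_diagPairs,
    Finset.prod_const, card_edgePairs, Fintype.card_prod]

lemma sum_cer_left (F : α × β → ℝ) (gb : Graph n β) :
    ∑ ga : Graph n α, cer F ga gb
      = (Fintype.card α : ℝ) ^ n * ∏ e ∈ edgePairs n, (∑ a, F (a, gb e)) := by
  have := sum_fun_prod (κ := α) (edgePairs n) (fun e a => F (a, gb e))
  rw [card_diagPairs] at this
  exact this

/-- Markov / Chernoff bound for the product measure. -/
lemma markov (P : α × β → ℝ) (hP0 : ∀ x, 0 ≤ P x)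
    (u : α × β → ℝ) (hu : ∀ x, 0 ≤ u x) (c0 : ℝ) (hc0 : 0 ≤ c0)
    (S : Set (Graph n α × Graph n β))
    (hS : ∀ p : Graph n α × Graph n β, p ∈ S → cer P p.1 p.2 ≠ 0 →
      1 ≤ c0 * cer u p.1 p.2) :
    prob (fun p : Graph n α × Graph n β => cer P p.1 p.2) S
      ≤ c0 * (((Fintype.card α * Fintype.card β : ℕ) : ℝ) ^ n
          * (∑ x, P x * u x) ^ (n.choose 2)) := by
  unfold prob
  have step : ∀ p : Graph n α × Graph n β,
      S.indicator (fun p : Graph n α × Graph n β => cer P p.1 p.2) p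
        ≤ c0 * cer (fun x => P x * u x) p.1 p.2 := by
    intro p
    have hsplit : cer (fun x => P x * u x) p.1 p.2 = cer P p.1 p.2 * cer u p.1 p.2 := by
      unfold cer; rw [← Finset.prod_mul_distrib]
    have hPn := cer_nonneg P hP0 p.1 p.2
    have hun := cer_nonneg u hu p.1 p.2
    by_cases hp : p ∈ S
    · rw [Set.indicator_of_mem hp]
      by_cases hz : cer P p.1 p.2 = 0
      · rw [hz, hsplit]; exact mul_nonneg hc0 (mul_nonneg hPn hun)
      · have h1 := hS p hp hz
        calc cer P p.1 p.2 = cer P p.1 p.2 * 1 := (mul_one _).symm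
          _ ≤ cer P p.1 p.2 * (c0 * cer u p.1 p.2) :=
              mul_le_mul_of_nonneg_left h1 hPn
          _ = c0 * cer (fun x => P x * u x) p.1 p.2 := by rw [hsplit]; ring
    · rw [Set.indicator_of_notMem hp, hsplit]
      exact mul_nonneg hc0 (mul_nonneg hPn hun)
  calc ∑ p : Graph n α × Graph n β,
        S.indicator (fun p : Graph n α × Graph n β => cer P p.1 p.2) p
      ≤ ∑ p : Graph n α × Graph n β, c0 * cer (fun x => P x * u x) p.1 p.2 :=
        Finset.sum_le_sum (fun p _ => step p)
    _ = c0 * ∑ p : Graph n α × Graph n β, cer (fun x => P x * u x) p.1 p.2 := by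
        rw [Finset.mul_sum]
    _ = _ := by rw [sum_cer_pair]

lemma sum_isoSum_le (f : Graph n α → ℝ) (hf : ∀ g, 0 ≤ f g) :
    ∑ g : Graph n α, isoSum f g ≤ (n.factorial : ℝ) * ∑ g : Graph n α, f g := by
  unfold isoSum
  have h1 : ∀ g : Graph n α, (∑ g' ∈ Finset.univ.filter
      (fun g' => ∃ π : Equiv.Perm (Fin n), relabel π g = g'), f g')
      = ∑ g' : Graph n α, if (∃ π : Equiv.Perm (Fin n), relabel π g = g') then f g' else 0 :=
    fun g => Finset.sum_filter _ _
  simp only [h1]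
  rw [Finset.sum_comm]
  have h2 : ∀ g' : Graph n α,
      (∑ g : Graph n α, if (∃ π : Equiv.Perm (Fin n), relabel π g = g') then f g' else 0)
        ≤ (n.factorial : ℝ) * f g' := by
    intro g'
    rw [← Finset.sum_filter]
    rw [Finset.sum_const]
    have hsub : (Finset.univ.filter
        (fun g : Graph n α => ∃ π : Equiv.Perm (Fin n), relabel π g = g'))
        ⊆ Finset.univ.image (fun π : Equiv.Perm (Fin n) => relabel π g') := by
      intro g hg
      obtain ⟨π, hπ⟩ := (Finset.mem_filter.1 hg).2
      apply Finset.mem_image.2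
      refine ⟨π⁻¹, Finset.mem_univ _, ?_⟩
      rw [← hπ, relabel_relabel, inv_mul_cancel, relabel_one]
    have hcard : (Finset.univ.filter
        (fun g : Graph n α => ∃ π : Equiv.Perm (Fin n), relabel π g = g')).card
        ≤ n.factorial := by
      calc _ ≤ (Finset.univ.image (fun π : Equiv.Perm (Fin n) => relabel π g')).card :=
            Finset.card_le_card hsub
        _ ≤ (Finset.univ : Finset (Equiv.Perm (Fin n))).card := Finset.card_image_le
        _ = n.factorial := by rw [Finset.card_univ, Fintype.card_perm, Fintype.card_fin]
    rw [nsmul_eq_mul]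
    exact mul_le_mul_of_nonneg_right (by exact_mod_cast hcard) (hf g')
  calc _ ≤ ∑ g' : Graph n α, (n.factorial : ℝ) * f g' := Finset.sum_le_sum (fun g' _ => h2 g')
    _ = _ := by rw [Finset.mul_sum]

end aux

section entropy
variable {α β : Type*} [Fintype α] [Fintype β]

lemma log2_H2 (F : α → ℝ) : Real.log 2 * H2 F = -∑ x, F x * Real.log (F x) := by
  unfold H2
  rw [Finset.mul_sum, ← Finset.sum_neg_distrib]
  apply Finset.sum_congr rfl
  intro x _
  rw [Real.logb, Real.log_inv]
  field_simp

lemma condH_key (P : α × β → ℝ) (hP0 : ∀ x, 0 ≤ P x) :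
    ∑ x, P x * Real.log ((∑ a, P (a, x.2)) / P x) = Real.log 2 * condH P := by
  have hlog2 : Real.log 2 ≠ 0 := (Real.log_pos one_lt_two).ne'
  have step1 : ∑ x, P x * Real.log ((∑ a, P (a, x.2)) / P x)
      = ∑ x, (P x * Real.log (∑ a, P (a, x.2)) - P x * Real.log (P x)) := by
    apply Finset.sum_congr rfl
    intro x _
    by_cases hx : P x = 0
    · rw [hx]; ring
    · have hPx : 0 < P x := lt_of_le_of_ne (hP0 x) (Ne.symm hx)
      have hQ : 0 < ∑ a, P (a, x.2) := by
        have := Finset.single_le_sum (f := fun a => P (a, x.2))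
          (fun a _ => hP0 _) (Finset.mem_univ x.1)
        calc (0:ℝ) < P x := hPx
          _ = P (x.1, x.2) := by rfl
          _ ≤ _ := this
      rw [Real.log_div hQ.ne' hx]
      ring
  have step2 : ∑ x : α × β, P x * Real.log (∑ a, P (a, x.2))
      = ∑ b, (∑ a, P (a, b)) * Real.log (∑ a, P (a, b)) := by
    rw [Fintype.sum_prod_type_right]
    apply Finset.sum_congr rfl
    intro b _
    rw [Finset.sum_mul]
  rw [step1, Finset.sum_sub_distrib, step2]
  unfold condH
  rw [mul_sub, log2_H2, log2_H2]
  ring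

end entropy

/-- existence of a positive exponent making the tilted sum less than 1 -/
lemma exists_lambda {γ : Type*} [Fintype γ] (p w : γ → ℝ)
    (hw : ∀ x, 0 < w x) (hp1 : ∑ x, p x = 1)
    (hL : ∑ x, p x * Real.log (w x) < 0) :
    ∃ l : ℝ, 0 < l ∧ l ≤ 1 ∧ ∑ x, p x * w x ^ (l:ℝ) < 1 := by
  set ψ : ℝ → ℝ := fun l => ∑ x, p x * w x ^ (l:ℝ) with hψ
  set L : ℝ := ∑ x, p x * Real.log (w x) with hLdef
  have hψ0 : ψ 0 = 1 := by
    simp only [hψ, Real.rpow_zero, mul_one]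
    exact hp1
  have hderiv : HasDerivAt ψ L 0 := by
    have : ∀ x ∈ Finset.univ (α := γ), HasDerivAt (fun l : ℝ => p x * w x ^ (l:ℝ))
        (p x * Real.log (w x)) 0 := by
      intro x _
      have h1 : ∀ l : ℝ, p x * w x ^ (l:ℝ) = p x * Real.exp (Real.log (w x) * l) := by
        intro l
        rw [Real.rpow_def_of_pos (hw x)]
      have h2 : HasDerivAt (fun l : ℝ => Real.exp (Real.log (w x) * l))
          (Real.log (w x)) 0 := by
        have := ((hasDerivAt_id (0:ℝ)).const_mul (Real.log (w x))).exp
        simpa using this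
      have h3 := h2.const_mul (p x)
      simp only [funext h1]
      simpa using h3
    have := HasDerivAt.fun_sum this
    simpa [hLdef] using this
  rw [hasDerivAt_iff_tendsto_slope] at hderiv
  have hmono : (nhdsWithin (0:ℝ) (Set.Ioi 0)) ≤ nhdsWithin (0:ℝ) {(0:ℝ)}ᶜ :=
    nhdsWithin_mono 0 (fun x hx => (ne_of_gt hx : x ≠ 0))
  have hslope : ∀ᶠ l in nhdsWithin (0:ℝ) (Set.Ioi 0), slope ψ 0 l < 0 :=
    ((hderiv.mono_left hmono).eventually_lt_const hL)
  have hIoo : ∀ᶠ l in nhdsWithin (0:ℝ) (Set.Ioi 0), l ∈ Set.Ioo (0:ℝ) 1 :=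
    Filter.eventually_of_mem
      (Ioo_mem_nhdsGT_of_mem (by norm_num : (0:ℝ) ∈ Set.Ico (0:ℝ) 1)) (fun x hx => hx)
  obtain ⟨l, hl1, hl2⟩ := (hslope.and hIoo).exists
  refine ⟨l, hl2.1, hl2.2.le, ?_⟩
  have hsl : (ψ l - ψ 0) / (l - 0) < 0 := by
    have := hl1
    rwa [slope_def_field] at this
  rw [hψ0, sub_zero] at hsl
  have hlpos := hl2.1
  show ψ l < 1
  rcases div_neg_iff.1 hsl with ⟨h1, h2⟩ | ⟨h1, h2⟩
  · linarith
  · linarith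

lemma tendsto_factorial_mul_pow_choose {B r : ℝ} (hB : 1 ≤ B) (hr0 : 0 ≤ r) (hr1 : r < 1) :
    Filter.Tendsto (fun n : ℕ => (n.factorial : ℝ) * B ^ n * r ^ (n.choose 2))
      Filter.atTop (nhds 0) := by
  -- reduce to the case 0 < r
  set r' : ℝ := max r (1/2) with hr'
  have hr'0 : 0 < r' := lt_of_lt_of_le (by norm_num) (le_max_right _ _)
  have hr'1 : r' < 1 := max_lt hr1 (by norm_num)
  have hmono : ∀ n : ℕ, (n.factorial : ℝ) * B ^ n * r ^ (n.choose 2)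
      ≤ (n.factorial : ℝ) * B ^ n * r' ^ (n.choose 2) := by
    intro n
    apply mul_le_mul_of_nonneg_left (pow_le_pow_left₀ hr0 (le_max_left _ _) _)
    positivity
  have hnn : ∀ n : ℕ, 0 ≤ (n.factorial : ℝ) * B ^ n * r ^ (n.choose 2) := by
    intro n; positivity
  have key : Filter.Tendsto (fun n : ℕ => (n.factorial : ℝ) * B ^ n * r' ^ (n.choose 2))
      Filter.atTop (nhds 0) := by
    set f : ℕ → ℝ := fun n => (n.factorial : ℝ) * B ^ n * r' ^ (n.choose 2) with hf
    have hfpos : ∀ n, 0 < f n := by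
      intro n
      apply mul_pos (mul_pos _ _) (pow_pos hr'0 _)
      · exact_mod_cast n.factorial_pos
      · exact pow_pos (lt_of_lt_of_le one_pos hB) _
    -- ratio
    have hratio : ∀ n : ℕ, f (n+1) = ((n+1 : ℝ) * B * r' ^ n) * f n := by
      intro n
      have hch : (n+1).choose 2 = n.choose 2 + n := by
        rw [Nat.choose_succ_succ n 1, Nat.choose_one_right]
        ring
      simp only [hf, Nat.factorial_succ, hch, pow_add, pow_succ]
      push_cast
      ring
    -- (n+1) * B * r'^n → 0
    have ht1 : Filter.Tendsto (fun n : ℕ => ((n:ℝ) + 1) * B * r' ^ n)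
        Filter.atTop (nhds 0) := by
      have h1 : Filter.Tendsto (fun n : ℕ => (n:ℝ) * r' ^ n) Filter.atTop (nhds 0) := by
        have := (summable_pow_mul_geometric_of_norm_lt_one 1
          (r := r') (by rw [Real.norm_eq_abs, abs_of_pos hr'0]; exact hr'1)).tendsto_atTop_zero
        simpa using this
      have h2 : Filter.Tendsto (fun n : ℕ => r' ^ n) Filter.atTop (nhds 0) :=
        tendsto_pow_atTop_nhds_zero_of_lt_one hr'0.le hr'1
      have h3 := (h1.add h2).const_mul B
      simp only [mul_zero, add_zero] at h3
      convert h3 using 2 with n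
      ring
    have hev : ∀ᶠ n in Filter.atTop, ‖f (n+1)‖ ≤ (1/2 : ℝ) * ‖f n‖ := by
      have : ∀ᶠ n : ℕ in Filter.atTop, ((n:ℝ)+1) * B * r' ^ n < 1/2 :=
        Filter.Tendsto.eventually_lt_const (by norm_num : (0:ℝ) < 1/2) ht1
      filter_upwards [this] with n hn
      rw [Real.norm_eq_abs, Real.norm_eq_abs, abs_of_pos (hfpos _), abs_of_pos (hfpos _),
        hratio n]
      apply mul_le_mul_of_nonneg_right hn.le (hfpos n).le
    have hsum : Summable f :=
      summable_of_ratio_norm_eventually_le (by norm_num : (1/2:ℝ) < 1) hev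
    exact hsum.tendsto_atTop_zero
  exact tendsto_of_tendsto_of_tendsto_of_le_of_le tendsto_const_nhds key hnn hmono

section ratio
variable {n : ℕ} {α β : Type*} [Fintype α] [Fintype β] [DecidableEq α] [DecidableEq β]

lemma ratio_eq (P : α × β → ℝ) (ga : Graph n α) (gb : Graph n β) :
    isoSum (fun ga' => isoSum (fun gb' => cer P ga' gb') gb) ga /
        isoSum (fun gb' => ∑ ga' : Graph n α, cer P ga' gb') gb
      = isoSum (fun ga' => cer P ga' gb) ga / ∑ ga' : Graph n α, cer P ga' gb := by
  classical
  set CA := Finset.univ.filter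
    (fun ga' : Graph n α => ∃ π : Equiv.Perm (Fin n), relabel π ga = ga') with hCA
  set CB := Finset.univ.filter
    (fun gb' : Graph n β => ∃ π : Equiv.Perm (Fin n), relabel π gb = gb') with hCB
  have hmemCA : ∀ (σ : Equiv.Perm (Fin n)) (g : Graph n α), g ∈ CA → relabel σ g ∈ CA := by
    intro σ g hg
    obtain ⟨π, hπ⟩ := (Finset.mem_filter.1 hg).2
    exact Finset.mem_filter.2 ⟨Finset.mem_univ _, ⟨σ * π, by rw [← relabel_relabel, hπ]⟩⟩
  have claim1 : ∀ gb' ∈ CB, ∑ ga' ∈ CA, cer P ga' gb' = ∑ ga' ∈ CA, cer P ga' gb := by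
    intro gb' hgb'
    obtain ⟨σ, hσ⟩ := (Finset.mem_filter.1 hgb').2
    refine (Finset.sum_nbij' (fun g => relabel σ g) (fun g => relabel σ⁻¹ g) ?_ ?_ ?_ ?_ ?_).symm
    · exact fun g hg => hmemCA σ g hg
    · exact fun g hg => hmemCA σ⁻¹ g hg
    · intro g _
      show relabel σ⁻¹ (relabel σ g) = g
      rw [relabel_relabel, inv_mul_cancel, relabel_one]
    · intro g _
      show relabel σ (relabel σ⁻¹ g) = g
      rw [relabel_relabel, mul_inv_cancel, relabel_one]
    · intro g _
      show cer P g gb = cer P (relabel σ g) gb'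
      rw [← hσ]
      exact (cer_relabel P σ g gb).symm
  have claim2 : ∀ gb' ∈ CB,
      (∑ ga' : Graph n α, cer P ga' gb') = ∑ ga' : Graph n α, cer P ga' gb := by
    intro gb' hgb'
    obtain ⟨σ, hσ⟩ := (Finset.mem_filter.1 hgb').2
    rw [← hσ]
    refine (Fintype.sum_bijective (relabel σ) (relabel_bijective σ)
      (fun ga' => cer P ga' gb) (fun ga' => cer P ga' (relabel σ gb)) ?_).symm
    intro g
    exact (cer_relabel P σ g gb).symm
  have hnum : isoSum (fun ga' => isoSum (fun gb' => cer P ga' gb') gb) ga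
      = (CB.card : ℝ) * isoSum (fun ga' => cer P ga' gb) ga := by
    unfold isoSum
    rw [Finset.sum_comm]
    rw [Finset.sum_congr rfl claim1]
    rw [Finset.sum_const, nsmul_eq_mul]
  have hden : isoSum (fun gb' => ∑ ga' : Graph n α, cer P ga' gb') gb
      = (CB.card : ℝ) * ∑ ga' : Graph n α, cer P ga' gb := by
    unfold isoSum
    rw [Finset.sum_congr rfl claim2, Finset.sum_const, nsmul_eq_mul]
  have hcard : (CB.card : ℝ) ≠ 0 := by
    have : gb ∈ CB := Finset.mem_filter.2 ⟨Finset.mem_univ _, ⟨1, relabel_one gb⟩⟩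
    have := Finset.card_pos.2 ⟨gb, this⟩
    exact_mod_cast this.ne'
  rw [hnum, hden, mul_div_mul_left _ _ hcard]

end ratio

set_option maxHeartbeats 3200000 in
/-- Both `C(n,2)⁻¹ log(1/P_{Sₐ|G_b}(Sₐ|G_b))` and
`C(n,2)⁻¹ log(1/P_{Sₐ|S_b}(Sₐ|S_b))` converge in probability to `H(A|B)` under the
CER model. -/
theorem stmt10 {α β : Type*} [Fintype α] [Fintype β] [DecidableEq α] [DecidableEq β]
    (P : α × β → ℝ) (hP0 : ∀ x, 0 ≤ P x) (hP1 : ∑ x, P x = 1) :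
    ∀ δ : ℝ, 0 < δ →
      (Filter.Tendsto (fun n : ℕ =>
          prob (fun p : Graph n α × Graph n β => cer P p.1 p.2)
            {p : Graph n α × Graph n β |
              δ < |(Cn2 n)⁻¹ * Real.logb 2
                  (isoSum (fun ga' => cer P ga' p.2) p.1 /
                    ∑ ga' : Graph n α, cer P ga' p.2)⁻¹ - condH P|})
        Filter.atTop (nhds 0)) ∧
      Filter.Tendsto (fun n : ℕ =>
          prob (fun p : Graph n α × Graph n β => cer P p.1 p.2)
            {p : Graph n α × Graph n β |
              δ < |(Cn2 n)⁻¹ * Real.logb 2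
                  (isoSum (fun ga' => isoSum (fun gb' => cer P ga' gb') p.2) p.1 /
                    isoSum (fun gb' => ∑ ga' : Graph n α, cer P ga' gb') p.2)⁻¹ -
                condH P|})
        Filter.atTop (nhds 0) := by
  classical
  intro δ hδ
  -- nonemptiness
  have hne : Nonempty (α × β) := by
    by_contra h
    rw [not_nonempty_iff] at h
    rw [Finset.univ_eq_empty, Finset.sum_empty] at hP1
    exact one_ne_zero hP1.symm
  obtain ⟨⟨a0, b0⟩⟩ := hne
  haveI : Nonempty α := ⟨a0⟩
  haveI : Nonempty β := ⟨b0⟩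
  set Hc := condH P with hHc
  set Q : β → ℝ := fun b => ∑ a, P (a, b) with hQ
  have hQpos : ∀ x : α × β, P x ≠ 0 → 0 < Q x.2 := by
    intro x hx
    have hPx : 0 < P x := (hP0 x).lt_of_ne (Ne.symm hx)
    have h1 : P (x.1, x.2) ≤ Q x.2 :=
      Finset.single_le_sum (f := fun a => P (a, x.2)) (fun a _ => hP0 _) (Finset.mem_univ x.1)
    calc (0:ℝ) < P x := hPx
      _ = P (x.1, x.2) := by rfl
      _ ≤ Q x.2 := h1
  have hlog2 : (0:ℝ) < Real.log 2 := Real.log_pos one_lt_two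
  set B : ℝ := ((Fintype.card α * Fintype.card β : ℕ) : ℝ) with hBdef
  have hB1 : 1 ≤ B := by
    rw [hBdef]
    exact_mod_cast Nat.one_le_iff_ne_zero.2 (Nat.mul_ne_zero Fintype.card_pos.ne'
      Fintype.card_pos.ne')
  have h2pos : (0:ℝ) < 2 := two_pos
  set s1 : ℝ := (2:ℝ) ^ (-(Hc + δ)) with hs1def
  set s2 : ℝ := (2:ℝ) ^ (-(Hc - δ/2)) with hs2def
  set τ : ℝ := (2:ℝ) ^ (-(Hc - δ)) with hτdef
  set r3 : ℝ := (2:ℝ) ^ (-(δ/2)) with hr3def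
  have hs1pos : 0 < s1 := Real.rpow_pos_of_pos h2pos _
  have hs2pos : 0 < s2 := Real.rpow_pos_of_pos h2pos _
  have hτpos : 0 < τ := Real.rpow_pos_of_pos h2pos _
  have hr3nn : 0 ≤ r3 := (Real.rpow_pos_of_pos h2pos _).le
  have hr3lt : r3 < 1 :=
    Real.rpow_lt_one_of_one_lt_of_neg one_lt_two (by linarith)
  set w1 : α × β → ℝ := fun x => if P x = 0 then 1 else s1 * Q x.2 / P x with hw1def
  set w2 : α × β → ℝ := fun x => if P x = 0 then 1 else P x / (s2 * Q x.2) with hw2def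
  have hw1pos : ∀ x, 0 < w1 x := by
    intro x
    rw [hw1def]
    simp only
    split_ifs with hx
    · norm_num
    · exact div_pos (mul_pos hs1pos (hQpos x hx)) ((hP0 x).lt_of_ne (Ne.symm hx))
  have hw2pos : ∀ x, 0 < w2 x := by
    intro x
    rw [hw2def]
    simp only
    split_ifs with hx
    · norm_num
    · exact div_pos ((hP0 x).lt_of_ne (Ne.symm hx)) (mul_pos hs2pos (hQpos x hx))
  have hKEY : ∑ x, P x * Real.log (Q x.2 / P x) = Real.log 2 * Hc := by
    rw [hHc]
    exact condH_key P hP0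
  have hL1 : ∑ x, P x * Real.log (w1 x) < 0 := by
    have e1 : ∀ x : α × β,
        P x * Real.log (w1 x) = P x * Real.log s1 + P x * Real.log (Q x.2 / P x) := by
      intro x
      by_cases hx : P x = 0
      · rw [hx]; ring
      · have hPx : 0 < P x := (hP0 x).lt_of_ne (Ne.symm hx)
        have hQx := hQpos x hx
        rw [hw1def]
        simp only
        rw [if_neg hx, mul_div_assoc, Real.log_mul hs1pos.ne' (div_pos hQx hPx).ne']
        ring
    rw [Finset.sum_congr rfl (fun x _ => e1 x), Finset.sum_add_distrib, ← Finset.sum_mul,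
      hP1, hKEY, one_mul, Real.log_rpow h2pos]
    nlinarith [mul_pos hδ hlog2]
  have hL2 : ∑ x, P x * Real.log (w2 x) < 0 := by
    have e2 : ∀ x : α × β,
        P x * Real.log (w2 x) = -(P x * Real.log s2) - P x * Real.log (Q x.2 / P x) := by
      intro x
      by_cases hx : P x = 0
      · rw [hx]; ring
      · have hPx : 0 < P x := (hP0 x).lt_of_ne (Ne.symm hx)
        have hQx := hQpos x hx
        rw [hw2def]
        simp only
        rw [if_neg hx, Real.log_div hPx.ne' (mul_pos hs2pos hQx).ne',
          Real.log_mul hs2pos.ne' hQx.ne', Real.log_div hQx.ne' hx]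
        ring
    rw [Finset.sum_congr rfl (fun x _ => e2 x), Finset.sum_sub_distrib, hKEY,
      Finset.sum_neg_distrib, ← Finset.sum_mul, hP1, one_mul, Real.log_rpow h2pos]
    nlinarith [mul_pos hδ hlog2]
  obtain ⟨l1, hl1pos, hl1le, hρ1lt⟩ := exists_lambda P w1 hw1pos hP1 hL1
  obtain ⟨l2, hl2pos, hl2le, hρ2lt⟩ := exists_lambda P w2 hw2pos hP1 hL2
  set ρ1 : ℝ := ∑ x, P x * w1 x ^ l1 with hρ1def
  set ρ2 : ℝ := ∑ x, P x * w2 x ^ l2 with hρ2def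
  have hρ1nn : 0 ≤ ρ1 :=
    Finset.sum_nonneg fun x _ => mul_nonneg (hP0 x) (Real.rpow_nonneg (hw1pos x).le _)
  have hρ2nn : 0 ≤ ρ2 :=
    Finset.sum_nonneg fun x _ => mul_nonneg (hP0 x) (Real.rpow_nonneg (hw2pos x).le _)
  have hB2 : 1 ≤ B ^ 2 := by nlinarith
  have htend : Filter.Tendsto (fun n : ℕ =>
      (n.factorial : ℝ) * (B^2)^n * ρ1^(n.choose 2)
        + ((n.factorial : ℝ) * (B^2)^n * ρ2^(n.choose 2)
          + (n.factorial : ℝ) * (B^2)^n * r3^(n.choose 2)))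
      Filter.atTop (nhds 0) := by
    have h1 := tendsto_factorial_mul_pow_choose hB2 hρ1nn hρ1lt
    have h2 := tendsto_factorial_mul_pow_choose hB2 hρ2nn hρ2lt
    have h3 := tendsto_factorial_mul_pow_choose hB2 hr3nn hr3lt
    have := h1.add (h2.add h3)
    simpa using this
  have key : ∀ n : ℕ, 2 ≤ n →
      prob (fun p : Graph n α × Graph n β => cer P p.1 p.2)
        {p : Graph n α × Graph n β |
          δ < |(Cn2 n)⁻¹ * Real.logb 2
              (isoSum (fun ga' => cer P ga' p.2) p.1 /
                ∑ ga' : Graph n α, cer P ga' p.2)⁻¹ - Hc|}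
      ≤ (n.factorial : ℝ) * (B^2)^n * ρ1^(n.choose 2)
        + ((n.factorial : ℝ) * (B^2)^n * ρ2^(n.choose 2)
          + (n.factorial : ℝ) * (B^2)^n * r3^(n.choose 2)) := by
    intro n hn
    have hC0 : 0 < n.choose 2 := Nat.choose_pos hn
    have hCR : (0:ℝ) < (n.choose 2 : ℝ) := by exact_mod_cast hC0
    have hcerNN : ∀ (ga : Graph n α) (gb : Graph n β), 0 ≤ cer P ga gb :=
      fun ga gb => cer_nonneg P hP0 ga gb
    set Dv : Graph n β → ℝ := fun gb => ∑ ga' : Graph n α, cer P ga' gb with hDv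
    set Nv : Graph n α → Graph n β → ℝ :=
      fun ga gb => isoSum (fun ga' => cer P ga' gb) ga with hNv
    have hNvnn : ∀ ga gb, 0 ≤ Nv ga gb :=
      fun ga gb => isoSum_nonneg _ (fun g => hcerNN g gb) ga
    set T1 : Set (Graph n α × Graph n β) :=
      {p | cer P p.1 p.2 ≠ 0 ∧ cer P p.1 p.2 < s1^(n.choose 2) * Dv p.2} with hT1
    set T2 : Set (Graph n α × Graph n β) :=
      {p | cer P p.1 p.2 ≠ 0 ∧ s2^(n.choose 2) * Dv p.2 < cer P p.1 p.2} with hT2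
    set T3 : Set (Graph n α × Graph n β) :=
      {p | cer P p.1 p.2 ≠ 0 ∧ cer P p.1 p.2 ≤ s2^(n.choose 2) * Dv p.2
        ∧ τ^(n.choose 2) * Dv p.2 < Nv p.1 p.2} with hT3
    -- Step A : splitting of the bad event
    have stepA : prob (fun p : Graph n α × Graph n β => cer P p.1 p.2)
        {p : Graph n α × Graph n β |
          δ < |(Cn2 n)⁻¹ * Real.logb 2
              (isoSum (fun ga' => cer P ga' p.2) p.1 /
                ∑ ga' : Graph n α, cer P ga' p.2)⁻¹ - Hc|}
        ≤ prob (fun p : Graph n α × Graph n β => cer P p.1 p.2) T1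
          + (prob (fun p : Graph n α × Graph n β => cer P p.1 p.2) T2
            + prob (fun p : Graph n α × Graph n β => cer P p.1 p.2) T3) := by
      unfold prob
      rw [← Finset.sum_add_distrib, ← Finset.sum_add_distrib]
      apply Finset.sum_le_sum
      intro p _
      have hind1 : 0 ≤ T1.indicator (fun p : Graph n α × Graph n β => cer P p.1 p.2) p :=
        Set.indicator_nonneg (fun q _ => hcerNN q.1 q.2) p
      have hind2 : 0 ≤ T2.indicator (fun p : Graph n α × Graph n β => cer P p.1 p.2) p :=
        Set.indicator_nonneg (fun q _ => hcerNN q.1 q.2) p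
      have hind3 : 0 ≤ T3.indicator (fun p : Graph n α × Graph n β => cer P p.1 p.2) p :=
        Set.indicator_nonneg (fun q _ => hcerNN q.1 q.2) p
      by_cases hmem : p ∈ {p : Graph n α × Graph n β |
          δ < |(Cn2 n)⁻¹ * Real.logb 2
              (isoSum (fun ga' => cer P ga' p.2) p.1 /
                ∑ ga' : Graph n α, cer P ga' p.2)⁻¹ - Hc|}
      swap
      · rw [Set.indicator_of_notMem hmem]
        linarith
      rw [Set.indicator_of_mem hmem]
      by_cases hz : cer P p.1 p.2 = 0
      · rw [hz]; linarith
      have hcer : 0 < cer P p.1 p.2 := (hcerNN p.1 p.2).lt_of_ne (Ne.symm hz)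
      suffices hsuf : p ∈ T1 ∨ p ∈ T2 ∨ p ∈ T3 by
        rcases hsuf with h | h | h
        · rw [Set.indicator_of_mem h]; linarith
        · rw [Set.indicator_of_mem h]; linarith
        · rw [Set.indicator_of_mem h]; linarith
      have hDpos : 0 < Dv p.2 :=
        lt_of_lt_of_le hcer
          (Finset.single_le_sum (fun g _ => hcerNN g p.2) (Finset.mem_univ p.1))
      have hNlb : cer P p.1 p.2 ≤ Nv p.1 p.2 :=
        le_isoSum _ (fun g => hcerNN g p.2) p.1
      have hNpos : 0 < Nv p.1 p.2 := lt_of_lt_of_le hcer hNlb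
      have hmem' : δ < |((n.choose 2 : ℝ))⁻¹ * Real.logb 2 (Dv p.2 / Nv p.1 p.2) - Hc| := by
        rw [Set.mem_setOf_eq] at hmem
        unfold Cn2 at hmem
        have hinv : (Nv p.1 p.2 / Dv p.2)⁻¹ = Dv p.2 / Nv p.1 p.2 := inv_div _ _
        rw [← hinv]
        exact hmem
      set L : ℝ := Real.logb 2 (Dv p.2 / Nv p.1 p.2) with hLd
      rcases lt_abs.1 hmem' with hup | hlow
      · -- upper deviation : event T1
        left
        have h2 : Hc + δ < ((n.choose 2 : ℝ))⁻¹ * L := by linarith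
        have h3 := mul_lt_mul_of_pos_left h2 hCR
        rw [mul_inv_cancel_left₀ hCR.ne'] at h3
        have h4 : (2:ℝ) ^ ((n.choose 2 : ℝ) * (Hc + δ)) < Dv p.2 / Nv p.1 p.2 :=
          (Real.lt_logb_iff_rpow_lt one_lt_two (div_pos hDpos hNpos)).1 h3
        have h5 : (2:ℝ) ^ ((n.choose 2 : ℝ) * (Hc + δ)) * Nv p.1 p.2 < Dv p.2 :=
          (lt_div_iff₀ hNpos).1 h4
        have hs1C : s1 ^ (n.choose 2) * (2:ℝ) ^ ((n.choose 2 : ℝ) * (Hc + δ)) = 1 := by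
          rw [hs1def, ← Real.rpow_natCast ((2:ℝ) ^ (-(Hc + δ))) (n.choose 2),
            ← Real.rpow_mul (by norm_num : (0:ℝ) ≤ 2),
            ← Real.rpow_add h2pos,
            show -(Hc + δ) * ((n.choose 2 : ℕ) : ℝ) + (n.choose 2 : ℝ) * (Hc + δ) = 0 by
              push_cast; ring,
            Real.rpow_zero]
        have h6 := mul_lt_mul_of_pos_left h5 (pow_pos hs1pos (n.choose 2))
        rw [← mul_assoc, hs1C, one_mul] at h6
        exact ⟨hz, lt_of_le_of_lt hNlb h6⟩
      · -- lower deviation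
        have h2 : ((n.choose 2 : ℝ))⁻¹ * L < Hc - δ := by linarith
        have h3 := mul_lt_mul_of_pos_left h2 hCR
        rw [mul_inv_cancel_left₀ hCR.ne'] at h3
        have h4 : Dv p.2 / Nv p.1 p.2 < (2:ℝ) ^ ((n.choose 2 : ℝ) * (Hc - δ)) :=
          (Real.logb_lt_iff_lt_rpow one_lt_two (div_pos hDpos hNpos)).1 h3
        have h5 : Dv p.2 < (2:ℝ) ^ ((n.choose 2 : ℝ) * (Hc - δ)) * Nv p.1 p.2 :=
          (div_lt_iff₀ hNpos).1 h4
        have hτC : τ ^ (n.choose 2) * (2:ℝ) ^ ((n.choose 2 : ℝ) * (Hc - δ)) = 1 := by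
          rw [hτdef, ← Real.rpow_natCast ((2:ℝ) ^ (-(Hc - δ))) (n.choose 2),
            ← Real.rpow_mul (by norm_num : (0:ℝ) ≤ 2),
            ← Real.rpow_add h2pos,
            show -(Hc - δ) * ((n.choose 2 : ℕ) : ℝ) + (n.choose 2 : ℝ) * (Hc - δ) = 0 by
              push_cast; ring,
            Real.rpow_zero]
        have h6 := mul_lt_mul_of_pos_left h5 (pow_pos hτpos (n.choose 2))
        rw [← mul_assoc, hτC, one_mul] at h6
        by_cases h7 : cer P p.1 p.2 ≤ s2 ^ (n.choose 2) * Dv p.2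
        · right; right; exact ⟨hz, h7, h6⟩
        · right; left; exact ⟨hz, not_le.1 h7⟩
    -- common facts
    have hcardα : (1:ℝ) ≤ (Fintype.card α : ℝ) := by exact_mod_cast Fintype.card_pos
    have hcardβ : (1:ℝ) ≤ (Fintype.card β : ℝ) := by exact_mod_cast Fintype.card_pos
    have hA1 : (1:ℝ) ≤ ((Fintype.card α : ℝ))^n := by
      calc (1:ℝ) = 1^n := (one_pow n).symm
        _ ≤ _ := pow_le_pow_left₀ (by norm_num) hcardα n
    have hApos : (0:ℝ) < ((Fintype.card α : ℝ))^n := lt_of_lt_of_le one_pos hA1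
    have hfact1 : (1:ℝ) ≤ (n.factorial : ℝ) := by exact_mod_cast n.factorial_pos
    have h0B : (0:ℝ) ≤ B := by linarith
    have h0B2 : (0:ℝ) ≤ B^2 := by nlinarith
    have hAB : ((Fintype.card α : ℝ))^n ≤ B^n := by
      apply pow_le_pow_left₀ (by positivity)
      rw [hBdef]
      push_cast
      nlinarith
    have hBn2 : (B^2)^n = B^n * B^n := by
      rw [← mul_pow, ← pow_two]
    have hBB : B^n ≤ (B^2)^n := by
      apply pow_le_pow_left₀ h0B (by nlinarith) n
    have hedgeFacts : ∀ p : Graph n α × Graph n β, cer P p.1 p.2 ≠ 0 →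
        (∀ e ∈ edgePairs n, 0 < P (p.1 e, p.2 e)) ∧
          (0 < ∏ e ∈ edgePairs n, Q (p.2 e)) ∧
          Dv p.2 = ((Fintype.card α : ℝ))^n * ∏ e ∈ edgePairs n, Q (p.2 e) := by
      intro p hz
      have hedge : ∀ e ∈ edgePairs n, 0 < P (p.1 e, p.2 e) := by
        intro e he
        have h1 : (∏ e ∈ edgePairs n, P (p.1 e, p.2 e)) ≠ 0 := hz
        exact (hP0 _).lt_of_ne (Ne.symm (Finset.prod_ne_zero_iff.1 h1 e he))
      have hQe : ∀ e ∈ edgePairs n, 0 < Q (p.2 e) :=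
        fun e he => hQpos (p.1 e, p.2 e) (hedge e he).ne'
      refine ⟨hedge, Finset.prod_pos hQe, ?_⟩
      show (∑ ga' : Graph n α, cer P ga' p.2) = _
      rw [sum_cer_left P p.2]
    -- Step B : Chernoff bound for T1
    have hT1bound : prob (fun p : Graph n α × Graph n β => cer P p.1 p.2) T1
        ≤ (n.factorial : ℝ) * (B^2)^n * ρ1^(n.choose 2) := by
      set u1 : α × β → ℝ := fun x => if P x = 0 then 0 else w1 x ^ l1 with hu1
      have hu1nn : ∀ x, 0 ≤ u1 x := by
        intro x
        rw [hu1]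
        simp only
        split_ifs
        · exact le_refl 0
        · exact Real.rpow_nonneg (hw1pos x).le _
      have hS : ∀ p : Graph n α × Graph n β, p ∈ T1 → cer P p.1 p.2 ≠ 0 →
          1 ≤ ((Fintype.card α : ℝ))^n * cer u1 p.1 p.2 := by
        intro p hp hz
        obtain ⟨-, hlt⟩ := (hp : cer P p.1 p.2 ≠ 0 ∧
          cer P p.1 p.2 < s1^(n.choose 2) * Dv p.2)
        obtain ⟨hedge, hprodQ, hDfac⟩ := hedgeFacts p hz
        have hcer : 0 < cer P p.1 p.2 := (hcerNN p.1 p.2).lt_of_ne (Ne.symm hz)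
        have hcu : cer u1 p.1 p.2 = (∏ e ∈ edgePairs n, w1 (p.1 e, p.2 e)) ^ l1 := by
          rw [← Real.finset_prod_rpow _ _ (fun e _ => (hw1pos _).le) l1]
          show (∏ e ∈ edgePairs n, u1 (p.1 e, p.2 e)) = _
          refine Finset.prod_congr rfl (fun e he => ?_)
          rw [hu1]
          simp only
          rw [if_neg (hedge e he).ne']
        have hprodw : ∏ e ∈ edgePairs n, w1 (p.1 e, p.2 e)
            = s1^(n.choose 2) * (∏ e ∈ edgePairs n, Q (p.2 e)) / cer P p.1 p.2 := by
          have hterm : ∀ e ∈ edgePairs n,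
              w1 (p.1 e, p.2 e) = s1 * Q (p.2 e) / P (p.1 e, p.2 e) := by
            intro e he
            rw [hw1def]
            simp only
            rw [if_neg (hedge e he).ne']
          rw [Finset.prod_congr rfl hterm, Finset.prod_div_distrib,
            Finset.prod_mul_distrib, Finset.prod_const, card_edgePairs]
          rfl
        have hlt' : cer P p.1 p.2
            < s1^(n.choose 2) * (((Fintype.card α : ℝ))^n * ∏ e ∈ edgePairs n, Q (p.2 e)) := by
          rw [← hDfac]
          exact hlt
        have hinvA : (((Fintype.card α : ℝ))^n)⁻¹ < ∏ e ∈ edgePairs n, w1 (p.1 e, p.2 e) := by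
          rw [hprodw, lt_div_iff₀ hcer]
          calc (((Fintype.card α : ℝ))^n)⁻¹ * cer P p.1 p.2
              < (((Fintype.card α : ℝ))^n)⁻¹ * (s1^(n.choose 2)
                  * (((Fintype.card α : ℝ))^n * ∏ e ∈ edgePairs n, Q (p.2 e))) :=
                mul_lt_mul_of_pos_left hlt' (inv_pos.2 hApos)
            _ = s1^(n.choose 2) * ∏ e ∈ edgePairs n, Q (p.2 e) := by
                rw [show (((Fintype.card α : ℝ))^n)⁻¹ * (s1^(n.choose 2)
                  * (((Fintype.card α : ℝ))^n * ∏ e ∈ edgePairs n, Q (p.2 e)))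
                  = ((((Fintype.card α : ℝ))^n)⁻¹ * ((Fintype.card α : ℝ))^n)
                    * (s1^(n.choose 2) * ∏ e ∈ edgePairs n, Q (p.2 e)) from by ring,
                  inv_mul_cancel₀ hApos.ne', one_mul]
        have h8 : ((((Fintype.card α : ℝ))^n)⁻¹) ^ l1
            ≤ (∏ e ∈ edgePairs n, w1 (p.1 e, p.2 e)) ^ l1 :=
          Real.rpow_le_rpow (inv_nonneg.2 hApos.le) hinvA.le hl1pos.le
        have h10 : (((Fintype.card α : ℝ))^n) ^ l1 ≤ ((Fintype.card α : ℝ))^n := by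
          calc (((Fintype.card α : ℝ))^n) ^ l1
              ≤ (((Fintype.card α : ℝ))^n) ^ (1:ℝ) :=
                Real.rpow_le_rpow_of_exponent_le hA1 hl1le
            _ = ((Fintype.card α : ℝ))^n := Real.rpow_one _
        have h11 : (((Fintype.card α : ℝ))^n)⁻¹ ≤ ((((Fintype.card α : ℝ))^n) ^ l1)⁻¹ :=
          inv_anti₀ (Real.rpow_pos_of_pos hApos l1) h10
        calc (1:ℝ) = ((Fintype.card α : ℝ))^n * (((Fintype.card α : ℝ))^n)⁻¹ :=
              (mul_inv_cancel₀ hApos.ne').symm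
          _ ≤ ((Fintype.card α : ℝ))^n * cer u1 p.1 p.2 := by
              apply mul_le_mul_of_nonneg_left _ hApos.le
              rw [hcu]
              calc (((Fintype.card α : ℝ))^n)⁻¹
                  ≤ ((((Fintype.card α : ℝ))^n) ^ l1)⁻¹ := h11
                _ = ((((Fintype.card α : ℝ))^n)⁻¹) ^ l1 :=
                    (Real.inv_rpow hApos.le l1).symm
                _ ≤ _ := h8
      have hmar := markov (n := n) P hP0 u1 hu1nn (((Fintype.card α : ℝ))^n) hApos.le T1 hS
      have hsum_u : ∑ x, P x * u1 x = ρ1 := by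
        rw [hρ1def]
        refine Finset.sum_congr rfl (fun x _ => ?_)
        by_cases hx : P x = 0
        · rw [hx]; ring
        · rw [hu1]
          simp only
          rw [if_neg hx]
      rw [hsum_u, ← hBdef] at hmar
      refine le_trans hmar ?_
      have hρc : (0:ℝ) ≤ ρ1 ^ (n.choose 2) := pow_nonneg hρ1nn _
      calc ((Fintype.card α : ℝ))^n * (B^n * ρ1^(n.choose 2))
          ≤ B^n * (B^n * ρ1^(n.choose 2)) :=
            mul_le_mul_of_nonneg_right hAB (mul_nonneg (pow_nonneg h0B n) hρc)
        _ = (B^2)^n * ρ1^(n.choose 2) := by rw [hBn2]; ring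
        _ ≤ (n.factorial : ℝ) * ((B^2)^n * ρ1^(n.choose 2)) :=
            le_mul_of_one_le_left (mul_nonneg (pow_nonneg h0B2 n) hρc) hfact1
        _ = (n.factorial : ℝ) * (B^2)^n * ρ1^(n.choose 2) := (mul_assoc _ _ _).symm
    -- Step C : Chernoff bound for T2
    have hT2bound : prob (fun p : Graph n α × Graph n β => cer P p.1 p.2) T2
        ≤ (n.factorial : ℝ) * (B^2)^n * ρ2^(n.choose 2) := by
      set u2 : α × β → ℝ := fun x => if P x = 0 then 0 else w2 x ^ l2 with hu2
      have hu2nn : ∀ x, 0 ≤ u2 x := by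
        intro x
        rw [hu2]
        simp only
        split_ifs
        · exact le_refl 0
        · exact Real.rpow_nonneg (hw2pos x).le _
      have hS : ∀ p : Graph n α × Graph n β, p ∈ T2 → cer P p.1 p.2 ≠ 0 →
          1 ≤ 1 * cer u2 p.1 p.2 := by
        intro p hp hz
        obtain ⟨-, hgt⟩ := (hp : cer P p.1 p.2 ≠ 0 ∧
          s2^(n.choose 2) * Dv p.2 < cer P p.1 p.2)
        obtain ⟨hedge, hprodQ, hDfac⟩ := hedgeFacts p hz
        have hcer : 0 < cer P p.1 p.2 := (hcerNN p.1 p.2).lt_of_ne (Ne.symm hz)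
        have hcu : cer u2 p.1 p.2 = (∏ e ∈ edgePairs n, w2 (p.1 e, p.2 e)) ^ l2 := by
          rw [← Real.finset_prod_rpow _ _ (fun e _ => (hw2pos _).le) l2]
          show (∏ e ∈ edgePairs n, u2 (p.1 e, p.2 e)) = _
          refine Finset.prod_congr rfl (fun e he => ?_)
          rw [hu2]
          simp only
          rw [if_neg (hedge e he).ne']
        have hprodw : ∏ e ∈ edgePairs n, w2 (p.1 e, p.2 e)
            = cer P p.1 p.2 / (s2^(n.choose 2) * ∏ e ∈ edgePairs n, Q (p.2 e)) := by
          have hterm : ∀ e ∈ edgePairs n,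
              w2 (p.1 e, p.2 e) = P (p.1 e, p.2 e) / (s2 * Q (p.2 e)) := by
            intro e he
            rw [hw2def]
            simp only
            rw [if_neg (hedge e he).ne']
          rw [Finset.prod_congr rfl hterm, Finset.prod_div_distrib,
            Finset.prod_mul_distrib, Finset.prod_const, card_edgePairs]
          rfl
        have hgt' : s2^(n.choose 2) * ∏ e ∈ edgePairs n, Q (p.2 e) < cer P p.1 p.2 := by
          calc s2^(n.choose 2) * ∏ e ∈ edgePairs n, Q (p.2 e)
              ≤ s2^(n.choose 2) * (((Fintype.card α : ℝ))^n
                  * ∏ e ∈ edgePairs n, Q (p.2 e)) :=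
                mul_le_mul_of_nonneg_left
                  (le_mul_of_one_le_left hprodQ.le hA1) (pow_pos hs2pos _).le
            _ = s2^(n.choose 2) * Dv p.2 := by rw [← hDfac]
            _ < cer P p.1 p.2 := hgt
        have hone : (1:ℝ) ≤ ∏ e ∈ edgePairs n, w2 (p.1 e, p.2 e) := by
          rw [hprodw, le_div_iff₀ (mul_pos (pow_pos hs2pos _) hprodQ), one_mul]
          exact hgt'.le
        rw [one_mul, hcu]
        calc (1:ℝ) = (1:ℝ) ^ l2 := (Real.one_rpow l2).symm
          _ ≤ _ := Real.rpow_le_rpow (by norm_num) hone hl2pos.le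
      have hmar := markov (n := n) P hP0 u2 hu2nn 1 (by norm_num) T2 hS
      have hsum_u : ∑ x, P x * u2 x = ρ2 := by
        rw [hρ2def]
        refine Finset.sum_congr rfl (fun x _ => ?_)
        by_cases hx : P x = 0
        · rw [hx]; ring
        · rw [hu2]
          simp only
          rw [if_neg hx]
      rw [hsum_u, ← hBdef, one_mul] at hmar
      refine le_trans hmar ?_
      have hρc : (0:ℝ) ≤ ρ2 ^ (n.choose 2) := pow_nonneg hρ2nn _
      calc B^n * ρ2^(n.choose 2)
          ≤ (B^2)^n * ρ2^(n.choose 2) := mul_le_mul_of_nonneg_right hBB hρc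
        _ ≤ (n.factorial : ℝ) * ((B^2)^n * ρ2^(n.choose 2)) :=
            le_mul_of_one_le_left (mul_nonneg (pow_nonneg h0B2 n) hρc) hfact1
        _ = (n.factorial : ℝ) * (B^2)^n * ρ2^(n.choose 2) := (mul_assoc _ _ _).symm
    -- Step D : counting bound for T3
    have hT3bound : prob (fun p : Graph n α × Graph n β => cer P p.1 p.2) T3
        ≤ (n.factorial : ℝ) * (B^2)^n * r3^(n.choose 2) := by
      have hs2fac : s2 ^ (n.choose 2) = r3 ^ (n.choose 2) * τ ^ (n.choose 2) := by
        rw [← mul_pow]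
        congr 1
        rw [hr3def, hτdef, hs2def, ← Real.rpow_add h2pos]
        congr 1
        ring
      have hpt : ∀ p : Graph n α × Graph n β,
          T3.indicator (fun p : Graph n α × Graph n β => cer P p.1 p.2) p
            ≤ r3 ^ (n.choose 2) * Nv p.1 p.2 := by
        intro p
        by_cases hp : p ∈ T3
        · rw [Set.indicator_of_mem hp]
          obtain ⟨hz, h7, h6⟩ := (hp : cer P p.1 p.2 ≠ 0 ∧
            cer P p.1 p.2 ≤ s2^(n.choose 2) * Dv p.2
            ∧ τ^(n.choose 2) * Dv p.2 < Nv p.1 p.2)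
          calc cer P p.1 p.2 ≤ s2^(n.choose 2) * Dv p.2 := h7
            _ = r3^(n.choose 2) * (τ^(n.choose 2) * Dv p.2) := by rw [hs2fac]; ring
            _ ≤ r3^(n.choose 2) * Nv p.1 p.2 :=
                mul_le_mul_of_nonneg_left h6.le (pow_nonneg hr3nn _)
        · rw [Set.indicator_of_notMem hp]
          exact mul_nonneg (pow_nonneg hr3nn _) (hNvnn p.1 p.2)
      have hsumN : ∑ p : Graph n α × Graph n β, Nv p.1 p.2
          ≤ (n.factorial : ℝ) * B^n := by
        calc ∑ p : Graph n α × Graph n β, Nv p.1 p.2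
            = ∑ ga : Graph n α, ∑ gb : Graph n β, Nv ga gb :=
              Fintype.sum_prod_type (f := fun p : Graph n α × Graph n β => Nv p.1 p.2)
          _ = ∑ gb : Graph n β, ∑ ga : Graph n α, Nv ga gb := Finset.sum_comm
          _ ≤ ∑ gb : Graph n β, (n.factorial : ℝ) * ∑ ga : Graph n α, cer P ga gb :=
              Finset.sum_le_sum (fun gb _ =>
                sum_isoSum_le (fun ga' => cer P ga' gb) (fun g => hcerNN g gb))
          _ = (n.factorial : ℝ) * ∑ gb : Graph n β, ∑ ga : Graph n α, cer P ga gb := by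
              rw [Finset.mul_sum]
          _ = (n.factorial : ℝ) * ∑ ga : Graph n α, ∑ gb : Graph n β, cer P ga gb := by
              rw [Finset.sum_comm]
          _ = (n.factorial : ℝ) * ∑ p : Graph n α × Graph n β, cer P p.1 p.2 := by
              congr 1
              exact (Fintype.sum_prod_type
                (f := fun p : Graph n α × Graph n β => cer P p.1 p.2)).symm
          _ = (n.factorial : ℝ) * B^n := by
              rw [sum_cer_pair P, hP1, one_pow, mul_one, ← hBdef]
      unfold prob
      calc ∑ p : Graph n α × Graph n β,
            T3.indicator (fun p : Graph n α × Graph n β => cer P p.1 p.2) p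
          ≤ ∑ p : Graph n α × Graph n β, r3 ^ (n.choose 2) * Nv p.1 p.2 :=
            Finset.sum_le_sum (fun p _ => hpt p)
        _ = r3 ^ (n.choose 2) * ∑ p : Graph n α × Graph n β, Nv p.1 p.2 := by
            rw [Finset.mul_sum]
        _ ≤ r3 ^ (n.choose 2) * ((n.factorial : ℝ) * B^n) :=
            mul_le_mul_of_nonneg_left hsumN (pow_nonneg hr3nn _)
        _ ≤ (n.factorial : ℝ) * (B^2)^n * r3^(n.choose 2) := by
            have h1 : (n.factorial : ℝ) * B^n ≤ (n.factorial : ℝ) * (B^2)^n :=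
              mul_le_mul_of_nonneg_left hBB (by positivity)
            calc r3 ^ (n.choose 2) * ((n.factorial : ℝ) * B^n)
                = (n.factorial : ℝ) * B^n * r3^(n.choose 2) := by ring
              _ ≤ (n.factorial : ℝ) * (B^2)^n * r3^(n.choose 2) :=
                  mul_le_mul_of_nonneg_right h1 (pow_nonneg hr3nn _)
    exact le_trans stepA (add_le_add hT1bound (add_le_add hT2bound hT3bound))
  -- final squeeze for part 1
  have main : Filter.Tendsto (fun n : ℕ =>
      prob (fun p : Graph n α × Graph n β => cer P p.1 p.2)
        {p : Graph n α × Graph n β |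
          δ < |(Cn2 n)⁻¹ * Real.logb 2
              (isoSum (fun ga' => cer P ga' p.2) p.1 /
                ∑ ga' : Graph n α, cer P ga' p.2)⁻¹ - Hc|})
      Filter.atTop (nhds 0) := by
    apply tendsto_of_tendsto_of_tendsto_of_le_of_le' tendsto_const_nhds htend
    · filter_upwards with n
      exact Finset.sum_nonneg fun p _ =>
        Set.indicator_nonneg (fun q _ => cer_nonneg P hP0 q.1 q.2) p
    · filter_upwards [Filter.eventually_ge_atTop 2] with n hn
      exact key n hn
  constructor
  · exact main
  · have hEq : ∀ n : ℕ, {p : Graph n α × Graph n β |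
        δ < |(Cn2 n)⁻¹ * Real.logb 2
            (isoSum (fun ga' => isoSum (fun gb' => cer P ga' gb') p.2) p.1 /
              isoSum (fun gb' => ∑ ga' : Graph n α, cer P ga' gb') p.2)⁻¹ - Hc|}
        = {p : Graph n α × Graph n β |
        δ < |(Cn2 n)⁻¹ * Real.logb 2
            (isoSum (fun ga' => cer P ga' p.2) p.1 /
              ∑ ga' : Graph n α, cer P ga' p.2)⁻¹ - Hc|} := by
      intro n
      ext p
      rw [Set.mem_setOf_eq, Set.mem_setOf_eq, ratio_eq P p.1 p.2]
    have hfun : (fun n : ℕ =>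
        prob (fun p : Graph n α × Graph n β => cer P p.1 p.2)
          {p : Graph n α × Graph n β |
            δ < |(Cn2 n)⁻¹ * Real.logb 2
                (isoSum (fun ga' => isoSum (fun gb' => cer P ga' gb') p.2) p.1 /
                  isoSum (fun gb' => ∑ ga' : Graph n α, cer P ga' gb') p.2)⁻¹ - Hc|})
        = (fun n : ℕ =>
        prob (fun p : Graph n α × Graph n β => cer P p.1 p.2)
          {p : Graph n α × Graph n β |
            δ < |(Cn2 n)⁻¹ * Real.logb 2
                (isoSum (fun ga' => cer P ga' p.2) p.1 /
                  ∑ ga' : Graph n α, cer P ga' p.2)⁻¹ - Hc|}) := by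
      funext n
      rw [hEq n]
    rw [hfun]
    exact main


end GraphSI
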